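/- Under the IV identification assumptions, for every t ∈ ℝ: F_co^{(0)}(t) − F_co^{(1)}(t) = K·(F₀(t) − F₁(t)), where F₀(t) = P(Y ≤ t | Z=0), F₁(t) = P(Y ≤ t | Z=1), and K = 1/(E(D|Z=1) − E(D|Z=0)). In particular, F_co^{(0)} = F_co^{(1)} if and only if F₀ = F₁. -/

import Mathlib

open MeasureTheory ProbabilityTheory

/-- Integral of `D` over the conditional measure on `{Z = z}`, where `D` agrees with a
binary function `G` on that event, equals the conditional probability that `G = 1`. -/
lemma binary_integral_cond {Ω : Type*} [MeasurableSpace Ω] (μ : Measure Ω)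
    {Z G D : Ω → ℝ} (hG : Measurable G) {z : ℝ}
    (hs : MeasurableSet {ω | Z ω = z})
    (hDG : ∀ ω, Z ω = z → D ω = G ω)
    (hGbin : ∀ ω, G ω = 0 ∨ G ω = 1) :
    ∫ ω, D ω ∂μ[|{ω | Z ω = z}] = (μ[|{ω | Z ω = z}] {ω | G ω = 1}).toReal := by
  have hcond : μ[|{ω | Z ω = z}]
      = (μ {ω | Z ω = z})⁻¹ • μ.restrict {ω | Z ω = z} := rfl
  have hae : ∀ᵐ ω ∂μ[|{ω | Z ω = z}], D ω = G ω := by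
    rw [hcond]
    exact Measure.ae_smul_measure ((ae_restrict_mem hs).mono fun ω hω => hDG ω hω) _
  rw [integral_congr_ae hae]
  have hGind : ∀ ω, G ω = Set.indicator {ω | G ω = 1} (fun _ => (1:ℝ)) ω := by
    intro ω
    rcases hGbin ω with h | h
    · simp [Set.indicator_apply, h]
    · simp [Set.indicator_apply, h]
  rw [integral_congr_ae (Filter.Eventually.of_forall hGind),
    integral_indicator_const (1:ℝ) (show MeasurableSet {ω | G ω = 1} from hG (measurableSet_singleton 1))]
  simp
  rfl

/-- Independence of `Z` and `W` applied to a `Z`-level set and a `W`-measurable set. -/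
lemma indep_inter_aux {Ω : Type*} [MeasurableSpace Ω] {μ : Measure Ω} {Z : Ω → ℝ}
    {W : Ω → ℝ × ℝ × ℝ × ℝ} (hindep : IndepFun Z W μ) (z : ℝ) {A : Set Ω}
    {C : Set (ℝ × ℝ × ℝ × ℝ)} (hC : MeasurableSet C) (hA : A = W ⁻¹' C) :
    μ ({ω | Z ω = z} ∩ A) = μ {ω | Z ω = z} * μ A := by
  subst hA
  exact hindep.measure_inter_preimage_eq_mul _ _ (measurableSet_singleton z) hC

/-- Under the IV identification assumptions, for all `t`:
`F_co^{(0)}(t) − F_co^{(1)}(t) = K·(F₀(t) − F₁(t))` with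
`K = 1/(E(D|Z=1) − E(D|Z=0))`; in particular `F_co^{(0)} = F_co^{(1)}` iff `F₀ = F₁`. -/
theorem complier_cdf_difference_identity {Ω : Type*} [MeasurableSpace Ω]
    (μ : Measure Ω) [IsProbabilityMeasure μ]
    (Z D0 D1 Y0 Y1 D Y : Ω → ℝ)
    (hZ : Measurable Z) (hD0 : Measurable D0) (hD1 : Measurable D1)
    (hY0 : Measurable Y0) (hY1 : Measurable Y1)
    (hZbin : ∀ ω, Z ω = 0 ∨ Z ω = 1)
    (hD0bin : ∀ ω, D0 ω = 0 ∨ D0 ω = 1)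
    (hD1bin : ∀ ω, D1 ω = 0 ∨ D1 ω = 1)
    (hD : ∀ ω, D ω = Z ω * D1 ω + (1 - Z ω) * D0 ω)
    (hYobs : ∀ ω, Y ω = D ω * Y1 ω + (1 - D ω) * Y0 ω)
    (hindep : IndepFun Z (fun ω => (Y0 ω, Y1 ω, D0 ω, D1 ω)) μ)
    (hmono : ∀ᵐ ω ∂μ, D0 ω ≤ D1 ω)
    (hnonzero : μ {ω | D0 ω = 1} < μ {ω | D1 ω = 1})
    (hZ1 : 0 < μ {ω | Z ω = 1}) (hZ0 : 0 < μ {ω | Z ω = 0}) :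
    (∀ t : ℝ,
      (μ[|{ω | D1 ω = 1 ∧ D0 ω = 0}] {ω | Y0 ω ≤ t}).toReal -
          (μ[|{ω | D1 ω = 1 ∧ D0 ω = 0}] {ω | Y1 ω ≤ t}).toReal =
        (1 / ((∫ ω, D ω ∂μ[|{ω | Z ω = 1}]) - ∫ ω, D ω ∂μ[|{ω | Z ω = 0}])) *
          ((μ[|{ω | Z ω = 0}] {ω | Y ω ≤ t}).toReal -
            (μ[|{ω | Z ω = 1}] {ω | Y ω ≤ t}).toReal)) ∧
    ((∀ t : ℝ,
        (μ[|{ω | D1 ω = 1 ∧ D0 ω = 0}] {ω | Y0 ω ≤ t}).toReal =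
          (μ[|{ω | D1 ω = 1 ∧ D0 ω = 0}] {ω | Y1 ω ≤ t}).toReal) ↔
      (∀ t : ℝ,
        (μ[|{ω | Z ω = 0}] {ω | Y ω ≤ t}).toReal =
          (μ[|{ω | Z ω = 1}] {ω | Y ω ≤ t}).toReal)) := by
  classical
  have hZ1S : MeasurableSet {ω | Z ω = 1} := hZ (measurableSet_singleton 1)
  have hZ0S : MeasurableSet {ω | Z ω = 0} := hZ (measurableSet_singleton 0)
  have hm_co : MeasurableSet {ω | D1 ω = 1 ∧ D0 ω = 0} :=
    (hD1 (measurableSet_singleton 1)).inter (hD0 (measurableSet_singleton 0))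
  -- splitting {D1 = 1} ∩ S by the value of D0, using monotonicity
  have hsplitD1 : ∀ S : Set Ω, MeasurableSet S →
      μ (({ω | D1 ω = 1} : Set Ω) ∩ S) = μ (({ω | D0 ω = 1} : Set Ω) ∩ S)
        + μ ({ω | D1 ω = 1 ∧ D0 ω = 0} ∩ S) := by
    intro S hS
    have hu : ({ω | D1 ω = 1} : Set Ω) ∩ S
        = ({ω | D1 ω = 1 ∧ D0 ω = 1} ∩ S) ∪ ({ω | D1 ω = 1 ∧ D0 ω = 0} ∩ S) := by
      rw [← Set.union_inter_distrib_right]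
      congr 1
      ext ω
      simp only [Set.mem_setOf_eq, Set.mem_union]
      constructor
      · intro h
        rcases hD0bin ω with h0 | h0
        · exact Or.inr ⟨h, h0⟩
        · exact Or.inl ⟨h, h0⟩
      · rintro (⟨h, _⟩ | ⟨h, _⟩) <;> exact h
    have hdisj : Disjoint ({ω | D1 ω = 1 ∧ D0 ω = 1} ∩ S)
        ({ω | D1 ω = 1 ∧ D0 ω = 0} ∩ S) := by
      refine Set.disjoint_left.mpr ?_
      rintro ω ⟨⟨_, h1⟩, _⟩ ⟨⟨_, h0⟩, _⟩
      rw [h1] at h0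
      exact one_ne_zero h0
    have hae : ({ω | D0 ω = 1} ∩ S : Set Ω) =ᵐ[μ] ({ω | D1 ω = 1 ∧ D0 ω = 1} ∩ S : Set Ω) := by
      rw [Filter.eventuallyEq_set]
      filter_upwards [hmono] with ω hω
      simp only [Set.mem_inter_iff, Set.mem_setOf_eq]
      constructor
      · rintro ⟨h0, hS'⟩
        refine ⟨⟨?_, h0⟩, hS'⟩
        rcases hD1bin ω with h | h
        · exfalso; rw [h0, h] at hω; linarith
        · exact h
      · rintro ⟨⟨_, h0⟩, hS'⟩; exact ⟨h0, hS'⟩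
    rw [hu, measure_union hdisj (hm_co.inter hS), measure_congr hae]
  -- splitting {D0 = 0} ∩ S by the value of D1, using monotonicity
  have hsplitD0 : ∀ S : Set Ω, MeasurableSet S →
      μ (({ω | D0 ω = 0} : Set Ω) ∩ S) = μ (({ω | D1 ω = 0} : Set Ω) ∩ S)
        + μ ({ω | D1 ω = 1 ∧ D0 ω = 0} ∩ S) := by
    intro S hS
    have hu : ({ω | D0 ω = 0} : Set Ω) ∩ S
        = ({ω | D1 ω = 0 ∧ D0 ω = 0} ∩ S) ∪ ({ω | D1 ω = 1 ∧ D0 ω = 0} ∩ S) := by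
      rw [← Set.union_inter_distrib_right]
      congr 1
      ext ω
      simp only [Set.mem_setOf_eq, Set.mem_union]
      constructor
      · intro h
        rcases hD1bin ω with h1 | h1
        · exact Or.inl ⟨h1, h⟩
        · exact Or.inr ⟨h1, h⟩
      · rintro (⟨_, h⟩ | ⟨_, h⟩) <;> exact h
    have hdisj : Disjoint ({ω | D1 ω = 0 ∧ D0 ω = 0} ∩ S)
        ({ω | D1 ω = 1 ∧ D0 ω = 0} ∩ S) := by
      refine Set.disjoint_left.mpr ?_
      rintro ω ⟨⟨h0, _⟩, _⟩ ⟨⟨h1, _⟩, _⟩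
      rw [h1] at h0
      exact one_ne_zero h0
    have hae : ({ω | D1 ω = 0} ∩ S : Set Ω) =ᵐ[μ] ({ω | D1 ω = 0 ∧ D0 ω = 0} ∩ S : Set Ω) := by
      rw [Filter.eventuallyEq_set]
      filter_upwards [hmono] with ω hω
      simp only [Set.mem_inter_iff, Set.mem_setOf_eq]
      constructor
      · rintro ⟨h1, hS'⟩
        refine ⟨⟨h1, ?_⟩, hS'⟩
        rcases hD0bin ω with h | h
        · exact h
        · exfalso; rw [h, h1] at hω; linarith
      · rintro ⟨⟨h1, _⟩, hS'⟩; exact ⟨h1, hS'⟩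
    rw [hu, measure_union hdisj (hm_co.inter hS), measure_congr hae]
  -- the basic split of P(D1=1)
  have hsplit_univ : μ {ω | D1 ω = 1}
      = μ {ω | D0 ω = 1} + μ {ω | D1 ω = 1 ∧ D0 ω = 0} := by
    simpa [Set.inter_univ] using hsplitD1 Set.univ MeasurableSet.univ
  -- the complier event has positive probability
  have hco_ne : μ {ω | D1 ω = 1 ∧ D0 ω = 0} ≠ 0 := by
    intro h
    rw [hsplit_univ, h, add_zero] at hnonzero
    exact lt_irrefl _ hnonzero
  have hco_top := measure_ne_top μ {ω | D1 ω = 1 ∧ D0 ω = 0}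
  have hp_ne : (μ {ω | D1 ω = 1 ∧ D0 ω = 0}).toReal ≠ 0 :=
    ENNReal.toReal_ne_zero.mpr ⟨hco_ne, hco_top⟩
  -- conditional expectations of D
  have hE1 : ∫ ω, D ω ∂μ[|{ω | Z ω = 1}] = (μ {ω | D1 ω = 1}).toReal := by
    rw [binary_integral_cond μ hD1 hZ1S (fun ω h => by rw [hD ω, h]; ring) hD1bin,
      cond_apply hZ1S,
      indep_inter_aux hindep 1 (A := {ω | D1 ω = 1}) (C := {p : ℝ × ℝ × ℝ × ℝ | p.2.2.2 = 1})
        ((measurable_snd.comp (measurable_snd.comp measurable_snd)) (measurableSet_singleton 1))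
        rfl,
      ← mul_assoc, ENNReal.inv_mul_cancel hZ1.ne' (measure_ne_top μ _), one_mul]
  have hE0 : ∫ ω, D ω ∂μ[|{ω | Z ω = 0}] = (μ {ω | D0 ω = 1}).toReal := by
    rw [binary_integral_cond μ hD0 hZ0S (fun ω h => by rw [hD ω, h]; ring) hD0bin,
      cond_apply hZ0S,
      indep_inter_aux hindep 0 (A := {ω | D0 ω = 1}) (C := {p : ℝ × ℝ × ℝ × ℝ | p.2.2.1 = 1})
        ((measurable_fst.comp (measurable_snd.comp measurable_snd)) (measurableSet_singleton 1))
        rfl,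
      ← mul_assoc, ENNReal.inv_mul_cancel hZ0.ne' (measure_ne_top μ _), one_mul]
  -- the denominator equals P(complier)
  have hdenom : (∫ ω, D ω ∂μ[|{ω | Z ω = 1}]) - (∫ ω, D ω ∂μ[|{ω | Z ω = 0}])
      = (μ {ω | D1 ω = 1 ∧ D0 ω = 0}).toReal := by
    rw [hE1, hE0, hsplit_univ, ENNReal.toReal_add (measure_ne_top μ _) (measure_ne_top μ _)]
    ring
  -- measurability of threshold sets
  have hmY1t : ∀ t : ℝ, MeasurableSet {ω | Y1 ω ≤ t} :=
    fun t => measurableSet_le hY1 measurable_const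
  have hmY0t : ∀ t : ℝ, MeasurableSet {ω | Y0 ω ≤ t} :=
    fun t => measurableSet_le hY0 measurable_const
  -- coordinate projections on ℝ⁴
  have m1 : Measurable (fun p : ℝ × ℝ × ℝ × ℝ => p.1) := measurable_fst
  have m2 : Measurable (fun p : ℝ × ℝ × ℝ × ℝ => p.2.1) :=
    measurable_fst.comp measurable_snd
  have m3 : Measurable (fun p : ℝ × ℝ × ℝ × ℝ => p.2.2.1) :=
    measurable_fst.comp (measurable_snd.comp measurable_snd)
  have m4 : Measurable (fun p : ℝ × ℝ × ℝ × ℝ => p.2.2.2) :=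
    measurable_snd.comp (measurable_snd.comp measurable_snd)
  -- decomposition of F₁
  have hF1 : ∀ t : ℝ, μ[|{ω | Z ω = 1}] {ω | Y ω ≤ t}
      = μ (({ω | D1 ω = 1} : Set Ω) ∩ {ω | Y1 ω ≤ t})
        + μ (({ω | D1 ω = 0} : Set Ω) ∩ {ω | Y0 ω ≤ t}) := by
    intro t
    have hset : ({ω | Z ω = 1} : Set Ω) ∩ {ω | Y ω ≤ t}
        = {ω | Z ω = 1} ∩ ((({ω | D1 ω = 1} : Set Ω) ∩ {ω | Y1 ω ≤ t})
            ∪ (({ω | D1 ω = 0} : Set Ω) ∩ {ω | Y0 ω ≤ t})) := by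
      ext ω
      simp only [Set.mem_inter_iff, Set.mem_setOf_eq, Set.mem_union]
      refine and_congr_right fun hz => ?_
      have hDω : D ω = D1 ω := by rw [hD ω, hz]; ring
      rcases hD1bin ω with h | h
      · have hY : Y ω = Y0 ω := by rw [hYobs ω, hDω, h]; ring
        simp [hY, h]
      · have hY : Y ω = Y1 ω := by rw [hYobs ω, hDω, h]; ring
        simp [hY, h]
    have hdisj : Disjoint (({ω | D1 ω = 1} : Set Ω) ∩ {ω | Y1 ω ≤ t})
        (({ω | D1 ω = 0} : Set Ω) ∩ {ω | Y0 ω ≤ t}) := by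
      refine Set.disjoint_left.mpr ?_
      rintro ω ⟨h1, _⟩ ⟨h0, _⟩
      simp only [Set.mem_setOf_eq] at h1 h0
      rw [h1] at h0
      exact one_ne_zero h0
    rw [cond_apply hZ1S, hset,
      indep_inter_aux hindep 1
        (A := (({ω | D1 ω = 1} : Set Ω) ∩ {ω | Y1 ω ≤ t})
            ∪ (({ω | D1 ω = 0} : Set Ω) ∩ {ω | Y0 ω ≤ t}))
        (C := ({p : ℝ × ℝ × ℝ × ℝ | p.2.2.2 = 1} ∩ {p | p.2.1 ≤ t})
            ∪ ({p : ℝ × ℝ × ℝ × ℝ | p.2.2.2 = 0} ∩ {p | p.1 ≤ t}))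
        (((m4 (measurableSet_singleton 1)).inter (m2 measurableSet_Iic)).union
          ((m4 (measurableSet_singleton 0)).inter (m1 measurableSet_Iic))) rfl,
      measure_union hdisj ((hD1 (measurableSet_singleton 0)).inter (hmY0t t)),
      ← mul_assoc, ENNReal.inv_mul_cancel hZ1.ne' (measure_ne_top μ _), one_mul]
  -- decomposition of F₀
  have hF0 : ∀ t : ℝ, μ[|{ω | Z ω = 0}] {ω | Y ω ≤ t}
      = μ (({ω | D0 ω = 1} : Set Ω) ∩ {ω | Y1 ω ≤ t})
        + μ (({ω | D0 ω = 0} : Set Ω) ∩ {ω | Y0 ω ≤ t}) := by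
    intro t
    have hset : ({ω | Z ω = 0} : Set Ω) ∩ {ω | Y ω ≤ t}
        = {ω | Z ω = 0} ∩ ((({ω | D0 ω = 1} : Set Ω) ∩ {ω | Y1 ω ≤ t})
            ∪ (({ω | D0 ω = 0} : Set Ω) ∩ {ω | Y0 ω ≤ t})) := by
      ext ω
      simp only [Set.mem_inter_iff, Set.mem_setOf_eq, Set.mem_union]
      refine and_congr_right fun hz => ?_
      have hDω : D ω = D0 ω := by rw [hD ω, hz]; ring
      rcases hD0bin ω with h | h
      · have hY : Y ω = Y0 ω := by rw [hYobs ω, hDω, h]; ring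
        simp [hY, h]
      · have hY : Y ω = Y1 ω := by rw [hYobs ω, hDω, h]; ring
        simp [hY, h]
    have hdisj : Disjoint (({ω | D0 ω = 1} : Set Ω) ∩ {ω | Y1 ω ≤ t})
        (({ω | D0 ω = 0} : Set Ω) ∩ {ω | Y0 ω ≤ t}) := by
      refine Set.disjoint_left.mpr ?_
      rintro ω ⟨h1, _⟩ ⟨h0, _⟩
      simp only [Set.mem_setOf_eq] at h1 h0
      rw [h1] at h0
      exact one_ne_zero h0
    rw [cond_apply hZ0S, hset,
      indep_inter_aux hindep 0
        (A := (({ω | D0 ω = 1} : Set Ω) ∩ {ω | Y1 ω ≤ t})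
            ∪ (({ω | D0 ω = 0} : Set Ω) ∩ {ω | Y0 ω ≤ t}))
        (C := ({p : ℝ × ℝ × ℝ × ℝ | p.2.2.1 = 1} ∩ {p | p.2.1 ≤ t})
            ∪ ({p : ℝ × ℝ × ℝ × ℝ | p.2.2.1 = 0} ∩ {p | p.1 ≤ t}))
        (((m3 (measurableSet_singleton 1)).inter (m2 measurableSet_Iic)).union
          ((m3 (measurableSet_singleton 0)).inter (m1 measurableSet_Iic))) rfl,
      measure_union hdisj ((hD0 (measurableSet_singleton 0)).inter (hmY0t t)),
      ← mul_assoc, ENNReal.inv_mul_cancel hZ0.ne' (measure_ne_top μ _), one_mul]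
  -- the main per-t identity
  have main : ∀ t : ℝ,
      (μ[|{ω | D1 ω = 1 ∧ D0 ω = 0}] {ω | Y0 ω ≤ t}).toReal -
          (μ[|{ω | D1 ω = 1 ∧ D0 ω = 0}] {ω | Y1 ω ≤ t}).toReal =
        (1 / ((∫ ω, D ω ∂μ[|{ω | Z ω = 1}]) - ∫ ω, D ω ∂μ[|{ω | Z ω = 0}])) *
          ((μ[|{ω | Z ω = 0}] {ω | Y ω ≤ t}).toReal -
            (μ[|{ω | Z ω = 1}] {ω | Y ω ≤ t}).toReal) := by
    intro t
    have h1 := hsplitD1 {ω | Y1 ω ≤ t} (hmY1t t)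
    have h0 := hsplitD0 {ω | Y0 ω ≤ t} (hmY0t t)
    have h1' : (μ (({ω | D1 ω = 1} : Set Ω) ∩ {ω | Y1 ω ≤ t})).toReal
        = (μ (({ω | D0 ω = 1} : Set Ω) ∩ {ω | Y1 ω ≤ t})).toReal
          + (μ ({ω | D1 ω = 1 ∧ D0 ω = 0} ∩ {ω | Y1 ω ≤ t})).toReal := by
      rw [h1, ENNReal.toReal_add (measure_ne_top μ _) (measure_ne_top μ _)]
    have h0' : (μ (({ω | D0 ω = 0} : Set Ω) ∩ {ω | Y0 ω ≤ t})).toReal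
        = (μ (({ω | D1 ω = 0} : Set Ω) ∩ {ω | Y0 ω ≤ t})).toReal
          + (μ ({ω | D1 ω = 1 ∧ D0 ω = 0} ∩ {ω | Y0 ω ≤ t})).toReal := by
      rw [h0, ENNReal.toReal_add (measure_ne_top μ _) (measure_ne_top μ _)]
    rw [hdenom, hF0 t, hF1 t, cond_apply hm_co μ {ω | Y0 ω ≤ t},
      cond_apply hm_co μ {ω | Y1 ω ≤ t},
      ENNReal.toReal_mul, ENNReal.toReal_mul, ENNReal.toReal_inv,
      ENNReal.toReal_add (measure_ne_top μ _) (measure_ne_top μ _),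
      ENNReal.toReal_add (measure_ne_top μ _) (measure_ne_top μ _),
      h1', h0']
    field_simp
    ring
  refine ⟨main, ?_⟩
  have hKne : (1 / ((∫ ω, D ω ∂μ[|{ω | Z ω = 1}]) - ∫ ω, D ω ∂μ[|{ω | Z ω = 0}])) ≠ 0 := by
    rw [hdenom]
    exact one_div_ne_zero hp_ne
  constructor
  · intro h t
    have hmain := main t
    rw [h t, sub_self] at hmain
    rcases mul_eq_zero.mp hmain.symm with hK | hdiff
    · exact absurd hK hKne
    · linarith
  · intro h t
    have hmain := main t
    rw [h t, sub_self, mul_zero] at hmain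
    linarith
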